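/- For all integers n ≥ 2 and 0 ≤ k ≤ n−1, one has 1GN(n,k+1) ≥ ((n−k)(n+k−1)/(k+1))·1GN(n,k); consequently, for every n ≥ 2, the sequence k ↦ 1GN(n,k) is increasing in k for 0 ≤ k ≤ n. -/
import Mathlib


/-- Odd double factorial: `ddf m` equals `m!!` for odd `m`, and `ddf 0 = 1`
(so that `ddf (2*n - 5)` with truncated subtraction encodes `(2n-5)!!`
with the convention `(-1)!! = 1`). -/
def ddf : ℕ → ℚ
  | 0 => 1
  | 1 => 1
  | n + 2 => (n + 2) * ddf n

/-- `N n k` is the number of one-component galled networks with `n - 1` leaves whose `k`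
reticulation-node children are labeled `1, …, k`, defined by the initial values
`N(n,0) = (2n-5)!!`, `N(n,1) = (n-2)(2n-5)!!` and the Gunawan--Rathin--Zhang recurrence. -/
def N : ℕ → ℕ → ℚ
  | n, 0 => ddf (2 * n - 5)
  | n, 1 => ((n : ℚ) - 2) * ddf (2 * n - 5)
  | n, k + 2 =>
      ((n : ℚ) + (k + 2) - 3) * N n (k + 1) + ((k : ℚ) + 1) * N n k
        + (1 / 2) * ∑ d ∈ Finset.Icc 1 (k + 1),
            (((k + 1).choose d : ℚ)) * ddf (2 * d - 1) *
              (N (n - d) (k + 1 - d) - N (n - d + 1) (k + 1 - d))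
  termination_by n k => k
  decreasing_by all_goals omega

/-- `oneGNk n k` is the number of one-component galled networks with `n` leaves and `k`
reticulation nodes: `1GN(n,k) = C(n,k) * N(n+1,k)`. -/
def oneGNk (n k : ℕ) : ℚ := (n.choose k : ℚ) * N (n + 1) k

lemma ddf_pos (m : ℕ) : 0 < ddf m := by
  induction m using ddf.induct with
  | case1 => norm_num [ddf]
  | case2 => norm_num [ddf]
  | case3 n ih => rw [ddf]; positivity

lemma ddf_nonneg (m : ℕ) : 0 ≤ ddf m := (ddf_pos m).le

lemma ddf_two_add (m : ℕ) : ddf (m + 2) = ((m : ℚ) + 2) * ddf m := by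
  rw [ddf]

lemma ddf_le_fact {d : ℕ} (hd : 2 ≤ d) :
    4 * ddf (2 * d - 1) ≤ 3 * (d.factorial : ℚ) * 2 ^ (d - 1) := by
  induction d, hd using Nat.le_induction with
  | base =>
      have h3 : ddf 3 = 3 := by
        rw [show (3:ℕ) = 1+2 from rfl, ddf_two_add]; norm_num [ddf]
      show 4 * ddf 3 ≤ _
      rw [h3]; norm_num [Nat.factorial]
  | succ d hd ih =>
    have e : 2 * (d + 1) - 1 = (2 * d - 1) + 2 := by omega
    rw [e, ddf_two_add]
    have e2 : ((2 * d - 1 : ℕ) : ℚ) = 2 * d - 1 := by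
      have : (1:ℕ) ≤ 2 * d := by omega
      push_cast [Nat.cast_sub this]; ring
    have e3 : (d + 1).factorial = (d + 1) * d.factorial := rfl
    have e4 : (d + 1) - 1 = (d - 1) + 1 := by omega
    have hdf : (0:ℚ) < ddf (2 * d - 1) := ddf_pos _
    have hfac : (0:ℚ) < (d.factorial : ℚ) := by positivity
    have hpow : (0:ℚ) < (2:ℚ) ^ (d - 1) := by positivity
    rw [e4, e3]
    push_cast
    calc 4 * (((((2 * d - 1 : ℕ)) : ℚ) + 2) * ddf (2 * d - 1))
        = (2 * (d:ℚ) + 1) * (4 * ddf (2 * d - 1)) := by rw [e2]; ring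
      _ ≤ (2 * (d:ℚ) + 1) * (3 * (d.factorial : ℚ) * 2 ^ (d - 1)) := by
          apply mul_le_mul_of_nonneg_left ih; positivity
      _ ≤ 3 * (((d:ℚ) + 1) * (d.factorial : ℚ)) * 2 ^ (d - 1 + 1) := by
          rw [pow_succ]; nlinarith [hfac, hpow, mul_pos hfac hpow]

lemma two_mul_pow_le (k : ℕ) :
    2 * ((k : ℚ) + 1) ^ (k + 1) ≤ ((k : ℚ) + 2) ^ (k + 1) := by
  have hk1 : (0:ℚ) < (k:ℚ) + 1 := by positivity
  have ha : (-2:ℚ) ≤ 1/((k:ℚ)+1) := by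
    have h0 : (0:ℚ) ≤ 1/((k:ℚ)+1) := by positivity
    linarith
  have h := one_add_mul_le_pow ha (k+1)
  have h2 : (2:ℚ) ≤ (1 + 1/((k:ℚ)+1)) ^ (k+1) := by
    refine le_trans (le_of_eq ?_) h
    push_cast
    field_simp
    norm_num
  have key : ((1 + 1/((k:ℚ)+1)) * ((k:ℚ)+1)) ^ (k+1) = ((k:ℚ)+2)^(k+1) := by
    congr 1; field_simp; ring
  calc 2 * ((k : ℚ) + 1) ^ (k + 1) ≤ (1 + 1/((k:ℚ)+1)) ^ (k+1) * ((k : ℚ) + 1) ^ (k + 1) := by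
        apply mul_le_mul_of_nonneg_right h2; positivity
    _ = ((k:ℚ)+2)^(k+1) := by rw [← mul_pow, key]

lemma ddf_le_pow {k : ℕ} (hk : 1 ≤ k) :
    ddf (2 * k + 1) ≤ 3 / 4 * ((k : ℚ) + 1) ^ (k + 1) := by
  induction k, hk using Nat.le_induction with
  | base =>
      have h3 : ddf (2*1+1) = 3 := by
        rw [show (2*1+1:ℕ) = 1+2 from rfl, ddf_two_add]; norm_num [ddf]
      rw [h3]; norm_num
  | succ k hk ih =>
    have e : 2 * (k + 1) + 1 = (2 * k + 1) + 2 := by omega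
    rw [e, ddf_two_add]
    have h1 : (0:ℚ) ≤ ddf (2*k+1) := ddf_nonneg _
    have h2 := two_mul_pow_le k
    have hp : (0:ℚ) < ((k:ℚ)+1)^(k+1) := by positivity
    have hc : ((2*k+1 : ℕ):ℚ) + 2 = 2*(k:ℚ)+3 := by push_cast; ring
    rw [hc]
    have step1 : (2*(k:ℚ)+3) * ddf (2*k+1) ≤ (2*(k:ℚ)+3) * (3/4*((k:ℚ)+1)^(k+1)) :=
      mul_le_mul_of_nonneg_left ih (by positivity)
    have e2 : ((k+1:ℕ):ℚ) + 1 = (k:ℚ) + 2 := by push_cast; ring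
    have h3 : ((k:ℚ)+2) * (2 * ((k:ℚ)+1)^(k+1)) ≤ ((k:ℚ)+2) * ((k:ℚ)+2)^(k+1) :=
      mul_le_mul_of_nonneg_left h2 (by positivity)
    have goal1 : (2*(k:ℚ)+3) * (3/4*((k:ℚ)+1)^(k+1)) ≤ 3/4*(((k:ℚ)+2) * ((k:ℚ)+2)^(k+1)) := by
      nlinarith [hp, h3]
    refine step1.trans (goal1.trans (le_of_eq ?_))
    rw [e2, pow_succ]
    ring

lemma keyAR {k d : ℕ} (h2 : 2 ≤ d) (hdk : d ≤ k + 1) :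
    ((k+1).choose d : ℚ) * ddf (2 * d - 1)
      ≤ 3/4 * ((k:ℚ) + 2 - d) ^ (d - 1) * ((k:ℚ) + 1) ^ d := by
  rcases eq_or_lt_of_le hdk with he | hlt
  · -- d = k + 1
    have hk1 : 1 ≤ k := by omega
    subst he
    rw [Nat.choose_self]
    have e1 : ((k:ℚ) + 2 - (k+1 : ℕ)) = 1 := by push_cast; ring
    have e2 : 2 * (k+1) - 1 = 2 * k + 1 := by omega
    rw [e1, e2, one_pow]
    have := ddf_le_pow hk1
    calc (1:ℚ) * ddf (2*k+1) = ddf (2*k+1) := by ring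
      _ ≤ 3/4 * ((k:ℚ)+1)^(k+1) := this
      _ = 3/4 * 1 * ((k:ℚ)+1)^(k+1) := by ring
  · -- d ≤ k
    have hdk' : d ≤ k := by omega
    -- ℕ facts
    have hn1 : (k+1).choose d * d.factorial ≤ (k+1)^d := by
      calc (k+1).choose d * d.factorial = d.factorial * (k+1).choose d := by ring
        _ ≤ (k+1)^d := by
            have h := Nat.descFactorial_le_pow (k+1) d
            rwa [Nat.descFactorial_eq_factorial_mul_choose] at h
    have hn2 : 2^(d-1) ≤ (k+2-d)^(d-1) := Nat.pow_le_pow_left (by omega) _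
    have hn3 : ((k+1).choose d * d.factorial) * 2^(d-1) ≤ (k+1)^d * (k+2-d)^(d-1) :=
      Nat.mul_le_mul hn1 hn2
    have hcast : ((k+2-d : ℕ) : ℚ) = (k:ℚ) + 2 - d := by
      have : d ≤ k + 2 := by omega
      push_cast [Nat.cast_sub this]; ring
    have hq : (((k+1).choose d : ℚ) * (d.factorial : ℚ)) * (2:ℚ)^(d-1)
        ≤ ((k:ℚ)+1)^d * ((k:ℚ) + 2 - d)^(d-1) := by
      have := hn3
      have hq' : ((((k+1).choose d * d.factorial) * 2^(d-1) : ℕ) : ℚ)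
          ≤ (((k+1)^d * (k+2-d)^(d-1) : ℕ) : ℚ) := by exact_mod_cast this
      push_cast [hcast] at hq'
      convert hq' using 2
    have hddf : ddf (2*d-1) ≤ 3/4 * (d.factorial : ℚ) * 2^(d-1) := by
      have := ddf_le_fact h2
      linarith
    have hc0 : (0:ℚ) ≤ ((k+1).choose d : ℚ) := by positivity
    calc ((k+1).choose d : ℚ) * ddf (2*d-1)
        ≤ ((k+1).choose d : ℚ) * (3/4 * (d.factorial : ℚ) * 2^(d-1)) := by
          apply mul_le_mul_of_nonneg_left hddf hc0
      _ = 3/4 * ((((k+1).choose d : ℚ) * (d.factorial : ℚ)) * (2:ℚ)^(d-1)) := by ring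
      _ ≤ 3/4 * (((k:ℚ)+1)^d * ((k:ℚ) + 2 - d)^(d-1)) := by
          apply mul_le_mul_of_nonneg_left hq (by norm_num)
      _ = 3/4 * ((k:ℚ) + 2 - d) ^ (d - 1) * ((k:ℚ) + 1) ^ d := by ring

def Good (t : ℕ) : Prop := ∀ n : ℕ, t < n →
  0 ≤ N n t ∧ N n t ≤ N (n+1) t ∧ (2*(n:ℚ) - 4) * N n t ≤ N (n+1) t ∧
  ∀ s : ℕ, s + 1 = t → ((n:ℚ) + t - 3) * N n s ≤ N n t

lemma good0 : Good 0 := by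
  intro n hn
  rcases lt_or_ge n 3 with h | h
  · interval_cases n
    · refine ⟨by norm_num [N, ddf], by norm_num [N, ddf], by norm_num [N, ddf], ?_⟩
      intro s hs; omega
    · refine ⟨by norm_num [N, ddf], by norm_num [N, ddf], by norm_num [N, ddf], ?_⟩
      intro s hs; omega
  · have e : 2*(n+1) - 5 = (2*n - 5) + 2 := by omega
    have e2 : ((2*n - 5 : ℕ) : ℚ) = 2*(n:ℚ) - 5 := by
      have h5 : (5:ℕ) ≤ 2*n := by omega
      push_cast [Nat.cast_sub h5]; ring
    have hn3 : (3:ℚ) ≤ (n:ℚ) := by exact_mod_cast h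
    have hd := ddf_pos (2*n - 5)
    rw [show N n 0 = ddf (2*n-5) from by rw [N],
        show N (n+1) 0 = ddf (2*(n+1)-5) from by rw [N], e, ddf_two_add, e2]
    refine ⟨hd.le, by nlinarith, by nlinarith, ?_⟩
    intro s hs; omega

lemma good1 : Good 1 := by
  intro n hn
  have hN1 : N n 1 = ((n:ℚ) - 2) * ddf (2*n - 5) := by rw [N]
  have hN1' : N (n+1) 1 = (((n+1:ℕ):ℚ) - 2) * ddf (2*(n+1) - 5) := by rw [N]
  have hN0 : N n 0 = ddf (2*n - 5) := by rw [N]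
  rcases lt_or_ge n 3 with h | h
  · interval_cases n
    refine ⟨by norm_num [N, ddf], by norm_num [N, ddf], by norm_num [N, ddf], ?_⟩
    intro s hs
    have : s = 0 := by omega
    subst this
    norm_num [N, ddf]
  · have e : 2*(n+1) - 5 = (2*n - 5) + 2 := by omega
    have e2 : ((2*n - 5 : ℕ) : ℚ) = 2*(n:ℚ) - 5 := by
      have h5 : (5:ℕ) ≤ 2*n := by omega
      push_cast [Nat.cast_sub h5]; ring
    have hn3 : (3:ℚ) ≤ (n:ℚ) := by exact_mod_cast h
    have hd := ddf_pos (2*n - 5)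
    rw [hN1', e, ddf_two_add, e2] at *
    rw [hN1]
    have hcoef1 : (n:ℚ) - 2 ≤ ((n:ℚ)+1-2) * (2*(n:ℚ)-5+2) := by nlinarith
    have hcoef2 : (2*(n:ℚ)-4) * ((n:ℚ)-2) ≤ ((n:ℚ)+1-2) * (2*(n:ℚ)-5+2) := by nlinarith
    refine ⟨by nlinarith, ?_, ?_, ?_⟩
    · push_cast
      nlinarith [mul_le_mul_of_nonneg_right hcoef1 hd.le]
    · push_cast
      nlinarith [mul_le_mul_of_nonneg_right hcoef2 hd.le]
    intro s hs
    have hs0 : s = 0 := by omega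
    subst hs0
    rw [hN0]
    push_cast
    exact le_of_eq (by ring)

lemma climbN {K : ℕ} (H : ∀ s, s < K → Good s) {j : ℕ} (hj : j < K) :
    ∀ p q : ℕ, 2 ≤ p → j < p → p ≤ q → (2*(p:ℚ) - 4)^(q-p) * N p j ≤ N q j := by
  intro p q hp hjp hpq
  induction q, hpq using Nat.le_induction with
  | base => simp
  | succ q hpq ih =>
    have e : q + 1 - p = (q - p) + 1 := by omega
    rw [e, pow_succ]
    have hNq : 0 ≤ N q j := (H j hj q (by omega)).1
    have hb : (2*(q:ℚ) - 4) * N q j ≤ N (q+1) j := (H j hj q (by omega)).2.2.1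
    have hpq4 : (0:ℚ) ≤ 2*(p:ℚ) - 4 := by
      have : (2:ℚ) ≤ (p:ℚ) := by exact_mod_cast hp
      linarith
    have hpq4' : 2*(p:ℚ) - 4 ≤ 2*(q:ℚ) - 4 := by
      have : (p:ℚ) ≤ (q:ℚ) := by exact_mod_cast hpq
      linarith
    calc (2*(p:ℚ) - 4)^(q-p) * (2*(p:ℚ) - 4) * N p j
        = (2*(p:ℚ) - 4) * ((2*(p:ℚ) - 4)^(q-p) * N p j) := by ring
      _ ≤ (2*(p:ℚ) - 4) * N q j := mul_le_mul_of_nonneg_left ih hpq4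
      _ ≤ (2*(q:ℚ) - 4) * N q j := mul_le_mul_of_nonneg_right hpq4' hNq
      _ ≤ N (q+1) j := hb

lemma climbK {K : ℕ} (H : ∀ s, s < K → Good s) (n j : ℕ) :
    ∀ k, j ≤ k → k < K → k < n → ((n:ℚ) + (j:ℚ) - 2)^(k-j) * N n j ≤ N n k := by
  intro k hjk
  induction k, hjk using Nat.le_induction with
  | base => intro _ _; simp
  | succ k hjk ih =>
    intro hK hn
    have ih' := ih (by omega) (by omega)
    have e : k + 1 - j = (k - j) + 1 := by omega
    rw [e, pow_succ]
    have hNk : 0 ≤ N n k := (H k (by omega) n (by omega)).1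
    have hc : ((n:ℚ) + ((k+1 : ℕ):ℚ) - 3) * N n k ≤ N n (k+1) :=
      (H (k+1) hK n hn).2.2.2 k rfl
    have hj2 : (0:ℚ) ≤ (n:ℚ) + (j:ℚ) - 2 := by
      have h1 : (j:ℚ) ≥ 0 := by positivity
      have h2 : ((k:ℕ):ℚ) < (n:ℚ) := by exact_mod_cast Nat.lt_of_succ_lt hn
      have h3 : (2:ℚ) ≤ (n:ℚ) := by
        have : 2 ≤ n := by omega
        exact_mod_cast this
      linarith
    have hmono : (n:ℚ) + (j:ℚ) - 2 ≤ (n:ℚ) + ((k+1 : ℕ):ℚ) - 3 := by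
      have : (j:ℚ) ≤ (k:ℚ) := by exact_mod_cast hjk
      push_cast
      linarith
    calc ((n:ℚ) + (j:ℚ) - 2)^(k-j) * ((n:ℚ) + (j:ℚ) - 2) * N n j
        = ((n:ℚ) + (j:ℚ) - 2) * (((n:ℚ) + (j:ℚ) - 2)^(k-j) * N n j) := by ring
      _ ≤ ((n:ℚ) + (j:ℚ) - 2) * N n k := mul_le_mul_of_nonneg_left ih' hj2
      _ ≤ ((n:ℚ) + ((k+1 : ℕ):ℚ) - 3) * N n k := mul_le_mul_of_nonneg_right hmono hNk
      _ ≤ N n (k+1) := hc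

lemma geo_sum_le (m : ℕ) : ∑ d ∈ Finset.Icc 2 (m+1), ((1:ℚ)/2)^(d-1) = 1 - (1/2)^m := by
  induction m with
  | zero => simp
  | succ m ih =>
    rw [Finset.sum_Icc_succ_top (by omega : 2 ≤ m+1+1), ih]
    have e : m + 1 + 1 - 1 = m + 1 := by omega
    rw [e, pow_succ]
    ring

lemma SB {K : ℕ} (H : ∀ s, s < K → Good s) (n k : ℕ) (hkK : k < K) (hn : k + 3 ≤ n) :
    ∑ d ∈ Finset.Icc 1 (k+1), ((k+1).choose d : ℚ) * ddf (2*d-1) * N (n-d+1) (k+1-d)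
      ≤ 2*((k:ℚ)+1) * N n k := by
  have hNk : 0 ≤ N n k := (H k hkK n (by omega)).1
  -- termwise bound for d ≥ 2
  have hterm : ∀ d ∈ Finset.Icc 2 (k+1),
      ((k+1).choose d : ℚ) * ddf (2*d-1) * N (n-d+1) (k+1-d)
        ≤ ((1:ℚ)/2)^(d-1) * (((k:ℚ)+1) * (3/4) * N n k) := by
    intro d hd
    rw [Finset.mem_Icc] at hd
    obtain ⟨hd2, hdk⟩ := hd
    set j := k + 1 - d with hj
    have hjk : j ≤ k := by omega
    have hjK : j < K := by omega
    have hX : 0 ≤ N (n-d+1) j := (H j hjK (n-d+1) (by omega)).1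
    -- climb in n
    have hclimbN := climbN H hjK (n-d+1) n (by omega) (by omega) (by omega)
    have eexp : n - (n-d+1) = d - 1 := by omega
    rw [eexp] at hclimbN
    -- climb in k
    have hclimbK := climbK H n j k hjk hkK (by omega)
    have eexp2 : k - j = d - 1 := by omega
    rw [eexp2] at hclimbK
    -- coefficient comparisons
    have hcastp : ((n-d+1 : ℕ) : ℚ) = (n:ℚ) - d + 1 := by
      have : d ≤ n := by omega
      push_cast [Nat.cast_sub this]; ring
    have hcastj : ((j : ℕ) : ℚ) = (k:ℚ) + 1 - d := by
      rw [hj]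
      have : d ≤ k + 1 := hdk
      push_cast [Nat.cast_sub this]; ring
    have hdn : (d:ℚ) ≤ (k:ℚ) + 1 := by exact_mod_cast hdk
    have hkn : (k:ℚ) + 3 ≤ (n:ℚ) := by exact_mod_cast hn
    have hA0 : (0:ℚ) ≤ 2*((k:ℚ) + 2 - d) := by linarith
    have hAA : 2*((k:ℚ) + 2 - d) ≤ 2*((n-d+1 : ℕ):ℚ) - 4 := by rw [hcastp]; linarith
    have hB0 : (0:ℚ) ≤ (k:ℚ) + 1 := by positivity
    have hBB : (k:ℚ) + 1 ≤ (n:ℚ) + (j:ℚ) - 2 := by rw [hcastj]; linarith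
    have hpowA : (2*((k:ℚ) + 2 - d))^(d-1) ≤ (2*((n-d+1 : ℕ):ℚ) - 4)^(d-1) :=
      pow_le_pow_left₀ hA0 hAA _
    have hpowB : ((k:ℚ) + 1)^(d-1) ≤ ((n:ℚ) + (j:ℚ) - 2)^(d-1) :=
      pow_le_pow_left₀ hB0 hBB _
    have hA0p : (0:ℚ) ≤ (2*((k:ℚ) + 2 - d))^(d-1) := pow_nonneg hA0 _
    have hB0p : (0:ℚ) ≤ ((k:ℚ) + 1)^(d-1) := pow_nonneg hB0 _
    have hNj : 0 ≤ N n j := (H j hjK n (by omega)).1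
    -- chain
    have hchain : (2*((k:ℚ) + 2 - d))^(d-1) * ((k:ℚ)+1)^(d-1) * N (n-d+1) j ≤ N n k := by
      calc (2*((k:ℚ) + 2 - d))^(d-1) * ((k:ℚ)+1)^(d-1) * N (n-d+1) j
          ≤ (2*((n-d+1 : ℕ):ℚ) - 4)^(d-1) * ((n:ℚ) + (j:ℚ) - 2)^(d-1) * N (n-d+1) j := by
            apply mul_le_mul_of_nonneg_right _ hX
            apply mul_le_mul hpowA hpowB hB0p (pow_nonneg (by linarith) _)
        _ = ((n:ℚ) + (j:ℚ) - 2)^(d-1) * ((2*((n-d+1 : ℕ):ℚ) - 4)^(d-1) * N (n-d+1) j) := by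
            ring
        _ ≤ ((n:ℚ) + (j:ℚ) - 2)^(d-1) * N n j := by
            apply mul_le_mul_of_nonneg_left hclimbN (pow_nonneg (by linarith) _)
        _ ≤ N n k := hclimbK
    -- arithmetic bound on the coefficient
    have hAR := keyAR hd2 hdk
    have hpow2 : ((1:ℚ)/2)^(d-1) * 2^(d-1) = 1 := by
      rw [← mul_pow]; norm_num
    have key_eq : (3:ℚ)/4 * ((k:ℚ) + 2 - d)^(d-1) * ((k:ℚ)+1)^d
        = (((1:ℚ)/2)^(d-1) * (((k:ℚ)+1) * (3/4)))
            * ((2*((k:ℚ) + 2 - d))^(d-1) * ((k:ℚ)+1)^(d-1)) := by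
      have ed : d = (d-1) + 1 := by omega
      calc (3:ℚ)/4 * ((k:ℚ) + 2 - d)^(d-1) * ((k:ℚ)+1)^d
          = (3:ℚ)/4 * ((k:ℚ) + 2 - d)^(d-1) * (((k:ℚ)+1)^(d-1) * ((k:ℚ)+1)) := by
            rw [ed]; rw [pow_succ]; rw [← ed]
        _ = _ := by
            rw [mul_pow (2:ℚ)]
            linear_combination (3:ℚ)/4 * ((k:ℚ) + 2 - d)^(d-1) * ((k:ℚ)+1)^(d-1)
              * ((k:ℚ)+1) * (1 - hpow2)
    calc ((k+1).choose d : ℚ) * ddf (2*d-1) * N (n-d+1) j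
        ≤ (3/4 * ((k:ℚ) + 2 - d)^(d-1) * ((k:ℚ)+1)^d) * N (n-d+1) j :=
          mul_le_mul_of_nonneg_right hAR hX
      _ = (((1:ℚ)/2)^(d-1) * (((k:ℚ)+1) * (3/4)))
            * ((2*((k:ℚ) + 2 - d))^(d-1) * ((k:ℚ)+1)^(d-1) * N (n-d+1) j) := by
          rw [key_eq]; ring
      _ ≤ (((1:ℚ)/2)^(d-1) * (((k:ℚ)+1) * (3/4))) * N n k := by
          apply mul_le_mul_of_nonneg_left hchain
          positivity
      _ = ((1:ℚ)/2)^(d-1) * (((k:ℚ)+1) * (3/4) * N n k) := by ring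
  -- split off d = 1
  have hsplit : Finset.Icc 1 (k+1) = insert 1 (Finset.Icc 2 (k+1)) := by
    ext x
    simp only [Finset.mem_Icc, Finset.mem_insert]
    omega
  have h1notin : (1:ℕ) ∉ Finset.Icc 2 (k+1) := by simp
  rw [hsplit, Finset.sum_insert h1notin]
  have hd1 : ((k+1).choose 1 : ℚ) * ddf (2*1-1) * N (n-1+1) (k+1-1) = ((k:ℚ)+1) * N n k := by
    rw [Nat.choose_one_right]
    have e1 : n - 1 + 1 = n := by omega
    have e2 : k + 1 - 1 = k := by omega
    have e3 : 2*1 - 1 = 1 := by omega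
    rw [e1, e2, e3, show ddf 1 = 1 from by rw [ddf]]
    push_cast; ring
  rw [hd1]
  have hsum2 : ∑ d ∈ Finset.Icc 2 (k+1), ((k+1).choose d : ℚ) * ddf (2*d-1) * N (n-d+1) (k+1-d)
      ≤ ∑ d ∈ Finset.Icc 2 (k+1), ((1:ℚ)/2)^(d-1) * (((k:ℚ)+1) * (3/4) * N n k) :=
    Finset.sum_le_sum hterm
  have hsum3 : ∑ d ∈ Finset.Icc 2 (k+1), ((1:ℚ)/2)^(d-1) * (((k:ℚ)+1) * (3/4) * N n k)
      = (1 - (1/2)^k) * (((k:ℚ)+1) * (3/4) * N n k) := by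
    rw [← Finset.sum_mul, geo_sum_le]
  have hhalf : (0:ℚ) ≤ (1/2:ℚ)^k := by positivity
  have hfinal : (1 - (1/2:ℚ)^k) * (((k:ℚ)+1) * (3/4) * N n k) ≤ ((k:ℚ)+1) * N n k := by
    have h34 : (0:ℚ) ≤ ((k:ℚ)+1) * N n k := by positivity
    nlinarith [mul_nonneg (mul_nonneg hhalf (by positivity : (0:ℚ) ≤ (k:ℚ)+1)) hNk]
  linarith [hsum2, hsum3.le, hsum3.ge, hfinal]

lemma good_all : ∀ t, Good t := by
  intro t
  induction t using Nat.strong_induction_on with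
  | _ t IH =>
    match t, IH with
    | 0, _ => exact good0
    | 1, _ => exact good1
    | (k+2), IH =>
      have H : ∀ s, s < k + 2 → Good s := fun s hs => IH s hs
      intro n hn
      -- hn : k + 2 < n, so n ≥ k + 3
      have hn3 : k + 3 ≤ n := hn
      have hkQ : ((k:ℚ)) ≥ 0 := by positivity
      have hnQ : (k:ℚ) + 3 ≤ (n:ℚ) := by exact_mod_cast hn3
      have hNk : 0 ≤ N n k := (H k (by omega) n (by omega)).1
      have hNk1 : 0 ≤ N n (k+1) := (H (k+1) (by omega) n (by omega)).1
      -- recurrence for row n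
      have hrec : N n (k+2) = ((n : ℚ) + ((k:ℚ) + 2) - 3) * N n (k + 1) + ((k : ℚ) + 1) * N n k
          + (1 / 2) * ∑ d ∈ Finset.Icc 1 (k + 1),
              (((k + 1).choose d : ℚ)) * ddf (2 * d - 1) *
                (N (n - d) (k + 1 - d) - N (n - d + 1) (k + 1 - d)) := by
        rw [N]
      -- lower bound for the correction sum, row n
      have hSlow : -(2*((k:ℚ)+1) * N n k)
          ≤ ∑ d ∈ Finset.Icc 1 (k + 1),
              (((k + 1).choose d : ℚ)) * ddf (2 * d - 1) *
                (N (n - d) (k + 1 - d) - N (n - d + 1) (k + 1 - d)) := by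
        have step1 : ∑ d ∈ Finset.Icc 1 (k + 1),
            -((((k + 1).choose d : ℚ)) * ddf (2 * d - 1) * N (n - d + 1) (k + 1 - d))
            ≤ ∑ d ∈ Finset.Icc 1 (k + 1),
              (((k + 1).choose d : ℚ)) * ddf (2 * d - 1) *
                (N (n - d) (k + 1 - d) - N (n - d + 1) (k + 1 - d)) := by
          apply Finset.sum_le_sum
          intro d hd
          rw [Finset.mem_Icc] at hd
          have hx : 0 ≤ N (n - d) (k + 1 - d) :=
            (H (k+1-d) (by omega) (n-d) (by omega)).1
          have hcd : (0:ℚ) ≤ (((k + 1).choose d : ℚ)) * ddf (2 * d - 1) :=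
            mul_nonneg (by positivity) (ddf_nonneg _)
          nlinarith [mul_nonneg hcd hx]
        have step2 : ∑ d ∈ Finset.Icc 1 (k + 1),
            (((k + 1).choose d : ℚ)) * ddf (2 * d - 1) * N (n - d + 1) (k + 1 - d)
            ≤ 2*((k:ℚ)+1) * N n k := SB H n k (by omega) hn3
        calc -(2*((k:ℚ)+1) * N n k)
            ≤ -(∑ d ∈ Finset.Icc 1 (k + 1),
              (((k + 1).choose d : ℚ)) * ddf (2 * d - 1) * N (n - d + 1) (k + 1 - d)) := by
              linarith
          _ = ∑ d ∈ Finset.Icc 1 (k + 1),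
              -((((k + 1).choose d : ℚ)) * ddf (2 * d - 1) * N (n - d + 1) (k + 1 - d)) := by
              rw [← Finset.sum_neg_distrib]
          _ ≤ _ := step1
      -- upper bound (nonpositivity) for the correction sum, row n
      have hShigh : ∑ d ∈ Finset.Icc 1 (k + 1),
          (((k + 1).choose d : ℚ)) * ddf (2 * d - 1) *
            (N (n - d) (k + 1 - d) - N (n - d + 1) (k + 1 - d)) ≤ 0 := by
        apply Finset.sum_nonpos
        intro d hd
        rw [Finset.mem_Icc] at hd
        have hmono : N (n - d) (k + 1 - d) ≤ N (n - d + 1) (k + 1 - d) :=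
          (H (k+1-d) (by omega) (n-d) (by omega)).2.1
        have hcd : (0:ℚ) ≤ (((k + 1).choose d : ℚ)) * ddf (2 * d - 1) :=
          mul_nonneg (by positivity) (ddf_nonneg _)
        nlinarith [mul_nonneg hcd (show (0:ℚ) ≤ N (n - d + 1) (k + 1 - d) - N (n - d) (k + 1 - d) by linarith)]
      -- key lower bound (component c at stage k+2)
      have hClow : ((n:ℚ) + ((k+2 : ℕ):ℚ) - 3) * N n (k+1) ≤ N n (k+2) := by
        have e : ((n:ℚ) + ((k+2 : ℕ):ℚ) - 3) = ((n : ℚ) + ((k:ℚ) + 2) - 3) := by push_cast; ring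
        rw [e]
        linarith [hrec, hSlow]
      have hcoefpos : (0:ℚ) ≤ (n:ℚ) + ((k+2 : ℕ):ℚ) - 3 := by push_cast; linarith
      -- nonnegativity at stage k+2
      have hA : 0 ≤ N n (k+2) := le_trans (mul_nonneg hcoefpos hNk1) hClow
      -- upper bound at stage k+2
      have hk1N : ((k:ℚ)+1) * N n k ≤ N n (k+1) := by
        have hc := (H (k+1) (by omega) n (by omega)).2.2.2 k rfl
        have : ((k:ℚ)+1) * N n k ≤ ((n:ℚ) + ((k+1 : ℕ):ℚ) - 3) * N n k := by
          apply mul_le_mul_of_nonneg_right _ hNk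
          push_cast; linarith
        linarith
      have hup : N n (k+2) ≤ ((n:ℚ) + (k:ℚ)) * N n (k+1) := by
        have := hrec
        nlinarith [hShigh, hk1N]
      -- recurrence for row n+1
      have hrec1 : N (n+1) (k+2) = (((n+1 : ℕ) : ℚ) + ((k:ℚ) + 2) - 3) * N (n+1) (k + 1)
          + ((k : ℚ) + 1) * N (n+1) k
          + (1 / 2) * ∑ d ∈ Finset.Icc 1 (k + 1),
              (((k + 1).choose d : ℚ)) * ddf (2 * d - 1) *
                (N (n + 1 - d) (k + 1 - d) - N (n + 1 - d + 1) (k + 1 - d)) := by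
        rw [N]
      have hN1k : 0 ≤ N (n+1) k := (H k (by omega) (n+1) (by omega)).1
      have hS1low : -(2*((k:ℚ)+1) * N (n+1) k)
          ≤ ∑ d ∈ Finset.Icc 1 (k + 1),
              (((k + 1).choose d : ℚ)) * ddf (2 * d - 1) *
                (N (n + 1 - d) (k + 1 - d) - N (n + 1 - d + 1) (k + 1 - d)) := by
        have step1 : ∑ d ∈ Finset.Icc 1 (k + 1),
            -((((k + 1).choose d : ℚ)) * ddf (2 * d - 1) * N (n + 1 - d + 1) (k + 1 - d))
            ≤ ∑ d ∈ Finset.Icc 1 (k + 1),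
              (((k + 1).choose d : ℚ)) * ddf (2 * d - 1) *
                (N (n + 1 - d) (k + 1 - d) - N (n + 1 - d + 1) (k + 1 - d)) := by
          apply Finset.sum_le_sum
          intro d hd
          rw [Finset.mem_Icc] at hd
          have hx : 0 ≤ N (n + 1 - d) (k + 1 - d) :=
            (H (k+1-d) (by omega) (n+1-d) (by omega)).1
          have hcd : (0:ℚ) ≤ (((k + 1).choose d : ℚ)) * ddf (2 * d - 1) :=
            mul_nonneg (by positivity) (ddf_nonneg _)
          nlinarith [mul_nonneg hcd hx]
        have step2 : ∑ d ∈ Finset.Icc 1 (k + 1),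
            (((k + 1).choose d : ℚ)) * ddf (2 * d - 1) * N (n + 1 - d + 1) (k + 1 - d)
            ≤ 2*((k:ℚ)+1) * N (n+1) k := SB H (n+1) k (by omega) (by omega)
        calc -(2*((k:ℚ)+1) * N (n+1) k)
            ≤ -(∑ d ∈ Finset.Icc 1 (k + 1),
              (((k + 1).choose d : ℚ)) * ddf (2 * d - 1) * N (n + 1 - d + 1) (k + 1 - d)) := by
              linarith
          _ = ∑ d ∈ Finset.Icc 1 (k + 1),
              -((((k + 1).choose d : ℚ)) * ddf (2 * d - 1) * N (n + 1 - d + 1) (k + 1 - d)) := by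
              rw [← Finset.sum_neg_distrib]
          _ ≤ _ := step1
      -- lower bound for row n+1 value
      have hlow1 : ((n:ℚ) + (k:ℚ)) * N (n+1) (k+1) ≤ N (n+1) (k+2) := by
        have e : (((n+1 : ℕ) : ℚ) + ((k:ℚ) + 2) - 3) = (n:ℚ) + (k:ℚ) := by push_cast; ring
        rw [e] at hrec1
        linarith [hrec1, hS1low]
      -- component b at stage k+2
      have hbprev : (2*(n:ℚ) - 4) * N n (k+1) ≤ N (n+1) (k+1) :=
        (H (k+1) (by omega) n (by omega)).2.2.1
      have hB : (2*(n:ℚ) - 4) * N n (k+2) ≤ N (n+1) (k+2) := by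
        have h24 : (0:ℚ) ≤ 2*(n:ℚ) - 4 := by linarith
        have hnk0 : (0:ℚ) ≤ (n:ℚ) + (k:ℚ) := by linarith
        calc (2*(n:ℚ) - 4) * N n (k+2)
            ≤ (2*(n:ℚ) - 4) * (((n:ℚ) + (k:ℚ)) * N n (k+1)) :=
              mul_le_mul_of_nonneg_left hup h24
          _ = ((n:ℚ) + (k:ℚ)) * ((2*(n:ℚ) - 4) * N n (k+1)) := by ring
          _ ≤ ((n:ℚ) + (k:ℚ)) * N (n+1) (k+1) :=
              mul_le_mul_of_nonneg_left hbprev hnk0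
          _ ≤ N (n+1) (k+2) := hlow1
      -- monotonicity at stage k+2
      have hmono2 : N n (k+2) ≤ N (n+1) (k+2) := by
        have h24 : (1:ℚ) ≤ 2*(n:ℚ) - 4 := by linarith
        nlinarith [hA, hB]
      refine ⟨hA, hmono2, hB, ?_⟩
      intro s hs
      have hs1 : s = k + 1 := by omega
      subst hs1
      exact hClow

/-- For `n ≥ 2` and `0 ≤ k ≤ n - 1`,
`1GN(n,k+1) ≥ ((n-k)(n+k-1)/(k+1)) · 1GN(n,k)`; consequently `k ↦ 1GN(n,k)` is
increasing for `0 ≤ k ≤ n`. -/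
theorem oneGNk_ratio_and_monotone (n : ℕ) (hn : 2 ≤ n) :
    (∀ k : ℕ, k ≤ n - 1 →
      oneGNk n (k + 1) ≥ ((n : ℚ) - k) * ((n : ℚ) + k - 1) / ((k : ℚ) + 1) * oneGNk n k) ∧
    (∀ k l : ℕ, k ≤ l → l ≤ n → oneGNk n k ≤ oneGNk n l) := by
  have hn2 : (2:ℚ) ≤ (n:ℚ) := by exact_mod_cast hn
  have part1 : ∀ k : ℕ, k ≤ n - 1 →
      oneGNk n (k + 1) ≥ ((n : ℚ) - k) * ((n : ℚ) + k - 1) / ((k : ℚ) + 1) * oneGNk n k := by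
    intro k hk
    have hkn : k + 1 ≤ n := by omega
    have hG := good_all (k+1) (n+1) (by omega)
    have hc := hG.2.2.2 k rfl
    have hc' : (((n:ℚ)) + (k:ℚ) - 1) * N (n+1) k ≤ N (n+1) (k+1) := by
      have e : (((n+1:ℕ):ℚ) + ((k+1:ℕ):ℚ) - 3) = ((n:ℚ)) + (k:ℚ) - 1 := by push_cast; ring
      rw [e] at hc
      exact hc
    have hNnn : 0 ≤ N (n+1) k := (good_all k (n+1) (by omega)).1
    have hch : ((n.choose (k+1) : ℚ)) * ((k:ℚ)+1) = (n.choose k : ℚ) * ((n:ℚ) - k) := by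
      have h0 := Nat.choose_succ_right_eq n k
      have h2 : ((n.choose (k+1) * (k+1) : ℕ) : ℚ) = ((n.choose k * (n - k) : ℕ) : ℚ) := by
        exact_mod_cast congrArg (fun x : ℕ => (x : ℚ)) h0
      push_cast [Nat.cast_sub (by omega : k ≤ n)] at h2
      exact h2
    show ((n : ℚ) - k) * ((n : ℚ) + k - 1) / ((k : ℚ) + 1) * oneGNk n k ≤ oneGNk n (k+1)
    unfold oneGNk
    have hk1ne : ((k:ℚ)+1) ≠ 0 := by positivity
    have keyeq : ((n : ℚ) - k) * ((n : ℚ) + k - 1) / ((k : ℚ) + 1)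
        * ((n.choose k : ℚ) * N (n+1) k)
        = (n.choose (k+1) : ℚ) * ((((n:ℚ)) + (k:ℚ) - 1) * N (n+1) k) := by
      field_simp
      linear_combination (((n:ℚ)) + (k:ℚ) - 1) * N (n+1) k * hch.symm
    rw [keyeq]
    exact mul_le_mul_of_nonneg_left hc' (by positivity)
  have step : ∀ k : ℕ, k + 1 ≤ n → oneGNk n k ≤ oneGNk n (k+1) := by
    intro k hk1
    have h1 := part1 k (by omega)
    have hkq : ((k:ℚ)) + 1 ≤ (n:ℚ) := by exact_mod_cast hk1
    have hk0 : (0:ℚ) ≤ (k:ℚ) := by positivity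
    have hfac : (1:ℚ) ≤ ((n:ℚ) - k) * ((n:ℚ) + k - 1) / ((k:ℚ) + 1) := by
      rw [le_div_iff₀ (by positivity)]
      nlinarith [hkq, hn2, hk0]
    have hpos : 0 ≤ oneGNk n k := by
      unfold oneGNk
      exact mul_nonneg (by positivity) ((good_all k (n+1) (by omega)).1)
    calc oneGNk n k = 1 * oneGNk n k := by ring
      _ ≤ ((n:ℚ) - k) * ((n:ℚ) + k - 1) / ((k:ℚ) + 1) * oneGNk n k :=
          mul_le_mul_of_nonneg_right hfac hpos
      _ ≤ oneGNk n (k+1) := h1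
  refine ⟨part1, ?_⟩
  intro k l hkl
  induction l, hkl using Nat.le_induction with
  | base => intro _; exact le_refl _
  | succ l hkl ih =>
    intro hl
    exact (ih (by omega)).trans (step l hl)
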